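/- Let r₁ = 1/2 and r_k = 1/(k (log₂ k)^{1+u}) for k ≥ 2, where 0 < u ≤ 1. Then ∑_{k=1}^∞ r_k < ∞ but ∑_{k=2}^∞ (- r_k log₂ r_k) = ∞. -/

import Mathlib

set_option maxHeartbeats 1000000


open Real

lemma one_le_logb_two {k : ℕ} (hk : 2 ≤ k) : 1 ≤ Real.logb 2 k := by
  have h2 : Real.logb 2 2 = 1 := Real.logb_self_eq_one (by norm_num)
  rw [← h2]
  exact Real.logb_le_logb_of_le (by norm_num) (by norm_num) (by exact_mod_cast hk)

lemma logb_two_pow (n : ℕ) : Real.logb 2 ((2:ℝ) ^ n) = n := by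
  rw [Real.logb_pow, Real.logb_self_eq_one (by norm_num)]
  ring

/-- Comparison function for the divergent part. -/
noncomputable def hcmp : ℕ → ℝ := fun k => if k ≤ 1 then 1/2 else ((k : ℝ) * Real.logb 2 k)⁻¹

lemma hcmp_nonneg (k : ℕ) : 0 ≤ hcmp k := by
  unfold hcmp
  split
  · norm_num
  · next h =>
    have hk : 2 ≤ k := by omega
    have := one_le_logb_two hk
    positivity

lemma hcmp_antitone : ∀ ⦃m n : ℕ⦄, 0 < m → m ≤ n → hcmp n ≤ hcmp m := by
  intro m n hm hmn
  unfold hcmp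
  by_cases hn : n ≤ 1
  · have : m ≤ 1 := le_trans hmn hn
    simp [hn, this]
  · have hn2 : 2 ≤ n := by omega
    have hLn : 1 ≤ Real.logb 2 n := one_le_logb_two hn2
    by_cases hm1 : m ≤ 1
    · simp only [if_neg hn, if_pos hm1]
      rw [inv_le_comm₀ (by positivity) (by norm_num)]
      calc (1/2 : ℝ)⁻¹ = 2 := by norm_num
        _ ≤ (n : ℝ) * 1 := by
            rw [mul_one]; exact_mod_cast hn2
        _ ≤ (n : ℝ) * Real.logb 2 n := by
            apply mul_le_mul_of_nonneg_left hLn (by positivity)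
    · have hm2 : 2 ≤ m := by omega
      have hLm : 1 ≤ Real.logb 2 m := one_le_logb_two hm2
      simp only [if_neg hn, if_neg hm1]
      apply inv_anti₀ (by positivity)
      have hcast : (m : ℝ) ≤ n := by exact_mod_cast hmn
      have : Real.logb 2 m ≤ Real.logb 2 n :=
        Real.logb_le_logb_of_le (by norm_num) (by positivity) hcast
      apply mul_le_mul hcast this (by linarith) (by positivity)

lemma not_summable_hcmp : ¬ Summable hcmp := by
  intro hS
  have hcond : Summable fun k : ℕ => (2:ℝ) ^ k * hcmp (2 ^ k) :=
    (summable_condensed_iff_of_nonneg hcmp_nonneg hcmp_antitone).mpr hS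
  have h2 : Summable (fun k : ℕ => if k = 0 then (1/2:ℝ) else (k:ℝ)⁻¹) := by
    apply hcond.congr
    intro k
    match k with
    | 0 => simp [hcmp]
    | (n+1) =>
      have hk2 : ¬ (2 ^ (n+1) ≤ 1) := by
        have : 2 ≤ 2 ^ (n+1) := Nat.one_lt_two_pow_iff.mpr (by omega)
        omega
      simp only [hcmp, if_neg hk2]
      push_cast
      rw [logb_two_pow]
      have hp : (0:ℝ) < 2 ^ (n+1) := by positivity
      have : ((n:ℝ)+1) ≠ 0 := by positivity
      push_cast
      field_simp
  have hfin : Summable (fun k : ℕ => if k = 0 then (1/2:ℝ) else 0) :=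
    summable_of_ne_finset_zero (s := {0}) (by intro k hk; simp at hk; simp [hk])
  have h3 : Summable (fun k : ℕ => ((k:ℝ))⁻¹) := by
    apply (h2.sub hfin).congr
    intro k
    match k with
    | 0 => simp
    | (n+1) => simp
  exact Real.not_summable_natCast_inv h3

theorem summable_r_not_summable_entropy (u : ℝ) (hu0 : 0 < u) (hu1 : u ≤ 1)
    (r : ℕ → ℝ) (hr0 : r 0 = 0) (hr1 : r 1 = 1 / 2)
    (hr : ∀ k, 2 ≤ k → r k = 1 / ((k : ℝ) * (Real.logb 2 k) ^ (1 + u))) :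
    (Summable r) ∧ ¬ Summable (fun k => - r k * Real.logb 2 (r k)) := by
  have hrnn : ∀ k, 0 ≤ r k := by
    intro k
    match k with
    | 0 => rw [hr0]
    | 1 => rw [hr1]; norm_num
    | (n+2) =>
      rw [hr _ (by omega)]
      have := one_le_logb_two (k := n+2) (by omega)
      positivity
  constructor
  · -- summability of r
    have hmono : ∀ ⦃m n : ℕ⦄, 0 < m → m ≤ n → r n ≤ r m := by
      intro m n hm hmn
      by_cases hn1 : n ≤ 1
      · have hm' : m = 1 := by omega
        have hn' : n = 1 := by omega
        rw [hm', hn']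
      · have hn2 : 2 ≤ n := by omega
        have hLn : 1 ≤ Real.logb 2 n := one_le_logb_two hn2
        have hprod : (2:ℝ) ≤ (n : ℝ) * Real.logb 2 n ^ (1+u) := by
          have h1 : (1:ℝ) ≤ Real.logb 2 n ^ (1+u) :=
            Real.one_le_rpow hLn (by linarith)
          calc (2:ℝ) ≤ (n : ℝ) := by exact_mod_cast hn2
            _ = (n:ℝ) * 1 := by ring
            _ ≤ (n : ℝ) * Real.logb 2 n ^ (1+u) := by
                apply mul_le_mul_of_nonneg_left h1 (by positivity)
        by_cases hm1 : m ≤ 1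
        · have hm' : m = 1 := by omega
          rw [hm', hr1, hr n hn2]
          rw [div_le_div_iff₀ (by linarith) (by norm_num)]
          linarith
        · have hm2 : 2 ≤ m := by omega
          have hLm : 1 ≤ Real.logb 2 m := one_le_logb_two hm2
          rw [hr n hn2, hr m hm2]
          apply one_div_le_one_div_of_le
          · positivity
          · have hcast : (m : ℝ) ≤ n := by exact_mod_cast hmn
            have hL : Real.logb 2 m ≤ Real.logb 2 n :=
              Real.logb_le_logb_of_le (by norm_num) (by positivity) hcast
            have hpow : Real.logb 2 m ^ (1+u) ≤ Real.logb 2 n ^ (1+u) :=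
              Real.rpow_le_rpow (by linarith) hL (by linarith)
            apply mul_le_mul hcast hpow (by positivity) (by positivity)
    rw [← summable_condensed_iff_of_nonneg hrnn hmono]
    have hbase : Summable fun k : ℕ => (((k:ℝ)) ^ (1+u))⁻¹ :=
      Real.summable_nat_rpow_inv.mpr (by linarith)
    have hfin : Summable (fun k : ℕ => if k = 0 then (1/2:ℝ) else 0) :=
      summable_of_ne_finset_zero (s := {0}) (by intro k hk; simp at hk; simp [hk])
    apply (hbase.add hfin).congr
    intro k
    match k with
    | 0 =>
      simp only [pow_zero, Nat.cast_zero]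
      rw [Real.zero_rpow (by positivity)]
      norm_num [hr1]
    | (n+1) =>
      rw [hr (2 ^ (n+1)) (Nat.one_lt_two_pow_iff.mpr (by omega))]
      rw [if_neg (Nat.succ_ne_zero n)]
      push_cast
      rw [logb_two_pow]
      have hp : (0:ℝ) < 2 ^ (n+1) := by positivity
      have hq : (0:ℝ) < ((n:ℝ)+1) ^ (1+u) := by positivity
      push_cast
      field_simp
      ring
  · -- divergence of entropy series
    intro hS
    apply not_summable_hcmp
    set f : ℕ → ℝ := fun k => - r k * Real.logb 2 (r k) with hf
    have hkey : ∀ k : ℕ, 2 ≤ k → hcmp k ≤ f k := by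
      intro n hn2
      set L : ℝ := Real.logb 2 n with hLdef
      have hL1 : 1 ≤ L := one_le_logb_two hn2
      have hncast : (2:ℝ) ≤ (n : ℝ) := by exact_mod_cast hn2
      have hLpos : 0 < L := by linarith
      have hrk : r n = 1 / ((n:ℝ) * L ^ (1+u)) := hr n hn2
      have hlogr : Real.logb 2 (r n) = -(L + (1+u) * Real.logb 2 L) := by
        rw [hrk, one_div, Real.logb_inv, Real.logb_mul (by positivity) (by positivity),
          Real.logb_rpow_eq_mul_logb_of_pos hLpos]
      have hne : hcmp n = ((n:ℝ) * L)⁻¹ := by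
        unfold hcmp
        rw [if_neg (by omega)]
      rw [hf]
      simp only
      rw [hne, hlogr, hrk]
      have hLu : L ^ u ≤ L := by
        calc L ^ u ≤ L ^ (1:ℝ) := Real.rpow_le_rpow_of_exponent_le hL1 hu1
          _ = L := Real.rpow_one L
      have hLupos : 0 < L ^ u := Real.rpow_pos_of_pos hLpos u
      have hEq : (1 / ((n:ℝ) * L ^ (1+u))) * L = ((n:ℝ) * L ^ u)⁻¹ := by
        rw [Real.rpow_add hLpos, Real.rpow_one]
        field_simp
      have key : ((n:ℝ) * L)⁻¹ ≤ (1 / ((n:ℝ) * L ^ (1+u))) * L := by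
        rw [hEq]
        apply inv_anti₀ (by positivity)
        exact mul_le_mul_of_nonneg_left hLu (by positivity)
      have hlogL : 0 ≤ Real.logb 2 L := Real.logb_nonneg (by norm_num) hL1
      have hpos : (0:ℝ) < (n:ℝ) * L ^ (1+u) := by positivity
      calc ((n:ℝ)*L)⁻¹ ≤ (1 / ((n:ℝ) * L^(1+u))) * L := key
        _ ≤ (1 / ((n:ℝ) * L^(1+u))) * (L + (1+u)*Real.logb 2 L) := by
            apply mul_le_mul_of_nonneg_left _ (by positivity)
            nlinarith
        _ = -(1 / ((n:ℝ) * L^(1+u))) * -(L + (1+u)*Real.logb 2 L) := by ring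
    have hcorr : Summable (fun n : ℕ => if n ≤ 1 then 1/2 - f n else 0) :=
      summable_of_ne_finset_zero (s := {0, 1})
        (by intro k hk; simp only [Finset.mem_insert, Finset.mem_singleton] at hk
            rw [if_neg (by omega)])
    have hF : Summable (fun n : ℕ => f n + if n ≤ 1 then 1/2 - f n else 0) := hS.add hcorr
    apply Summable.of_nonneg_of_le hcmp_nonneg _ hF
    intro n
    by_cases hn : n ≤ 1
    · have h1 : hcmp n = 1/2 := by unfold hcmp; rw [if_pos hn]
      rw [h1, if_pos hn]
      linarith
    · rw [if_neg hn, add_zero]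
      exact hkey n (by omega)
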